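/- Suppose (A,d_A) and (B,d_B) are graded commutative dg-division algebras, (A,d_A) is acyclic, and φ:(A,d_A)→(B,d_B) is a dg-extension of dg-algebras. If the restriction φ|_{ker(d_A)}: ker(d_A)→ker(d_B) is a graded-separable extension of graded rings, then φ is a dg-separable extension. If moreover the characteristic of A is different from 2, the converse also holds: φ dg-separable implies φ|_{ker(d_A)} graded-separable. -/

import Mathlib

open scoped TensorProduct

section DGCore

variable {A : Type} [Ring A] {B : Type} [Ring B]

/-- `(A, d)` together with the grading `𝒜` is a differential graded ring:
`d` is a square-zero additive endomorphism of degree `1` satisfying the graded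
Leibniz rule. -/
structure IsDGRing (𝒜 : ℤ → AddSubgroup A) (d : A →+ A) : Prop where
  d_sq : ∀ x, d (d x) = 0
  d_mem : ∀ (i : ℤ), ∀ x ∈ 𝒜 i, d x ∈ 𝒜 (i + 1)
  leibniz : ∀ (i : ℤ) (a b : A), a ∈ 𝒜 i →
    d (a * b) = d a * b + ((Int.negOnePow i : ℤ)) • (a * d b)

/-- A homomorphism of differential graded rings (a dg-extension). -/
structure IsDGHom (𝒜 : ℤ → AddSubgroup A) (dA : A →+ A)
    (𝒝 : ℤ → AddSubgroup B) (dB : B →+ B) (φ : A →+* B) : Prop where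
  map_mem : ∀ (i : ℤ), ∀ x ∈ 𝒜 i, φ x ∈ 𝒝 i
  map_d : ∀ x, φ (dA x) = dB (φ x)

/-- Graded commutativity: `a * b = (-1)^{|a||b|} b * a` for homogeneous elements. -/
def IsGradedComm (𝒜 : ℤ → AddSubgroup A) : Prop :=
  ∀ (i j : ℤ) (a b : A), a ∈ 𝒜 i → b ∈ 𝒜 j →
    a * b = ((Int.negOnePow (i * j) : ℤ)) • (b * a)

/-- A dg-ring is acyclic if its homology vanishes, i.e. every cycle is a boundary. -/
def IsAcyclic (d : A →+ A) : Prop := ∀ x, d x = 0 → ∃ y, d y = x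

/-- A dg left ideal: a graded additive subgroup closed under the differential and
under left multiplication. -/
def IsDGLeftIdeal (𝒜 : ℤ → AddSubgroup A) [GradedRing 𝒜] (d : A →+ A)
    (I : AddSubgroup A) : Prop :=
  (∀ (a : A), ∀ x ∈ I, a * x ∈ I) ∧ (∀ x ∈ I, d x ∈ I) ∧
    (∀ x ∈ I, ∀ i : ℤ, (DirectSum.decompose 𝒜 x i : A) ∈ I)

/-- A dg right ideal. -/
def IsDGRightIdeal (𝒜 : ℤ → AddSubgroup A) [GradedRing 𝒜] (d : A →+ A)
    (I : AddSubgroup A) : Prop :=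
  (∀ (a : A), ∀ x ∈ I, x * a ∈ I) ∧ (∀ x ∈ I, d x ∈ I) ∧
    (∀ x ∈ I, ∀ i : ℤ, (DirectSum.decompose 𝒜 x i : A) ∈ I)

/-- A dg-division ring: the only dg left ideals and the only dg right ideals
are `0` and the whole ring. -/
def IsDGDivisionRing (𝒜 : ℤ → AddSubgroup A) [GradedRing 𝒜] (d : A →+ A) : Prop :=
  (0 : A) ≠ 1 ∧ (∀ I, IsDGLeftIdeal 𝒜 d I → I = ⊥ ∨ I = ⊤) ∧
    (∀ I, IsDGRightIdeal 𝒜 d I → I = ⊥ ∨ I = ⊤)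

/-- A graded division ring (gr-field): every nonzero homogeneous element is invertible. -/
def IsGradedDivisionRing (𝒜 : ℤ → AddSubgroup A) : Prop :=
  (0 : A) ≠ 1 ∧ ∀ (i : ℤ) (x : A), x ∈ 𝒜 i → x ≠ 0 → IsUnit x

/-- The relations defining `B ⊗[A] B` inside `B ⊗[ℤ] B`, for an extension `φ : A →+* B`. -/
def sepRel (φ : A →+* B) : Submodule ℤ (B ⊗[ℤ] B) :=
  Submodule.span ℤ {x | ∃ (b b' : B) (a : A),
    x = (b * φ a) ⊗ₜ[ℤ] b' - b ⊗ₜ[ℤ] (φ a * b')}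

/-- The balanced tensor product `B ⊗[A] B` for an extension `φ : A →+* B`. -/
abbrev SepTensor (φ : A →+* B) := (B ⊗[ℤ] B) ⧸ sepRel φ

/-- The canonical projection `B ⊗[ℤ] B → B ⊗[A] B`. -/
noncomputable def sepMk (φ : A →+* B) : B ⊗[ℤ] B →ₗ[ℤ] SepTensor φ := (sepRel φ).mkQ

/-- The multiplication map `μ : B ⊗[A] B → B`. -/
noncomputable def sepMul (φ : A →+* B) : SepTensor φ →ₗ[ℤ] B :=
  Submodule.liftQ _ (TensorProduct.lift (LinearMap.mul ℤ B)) (by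
    rw [sepRel, Submodule.span_le]
    rintro x ⟨b, b', a, rfl⟩
    simp [SetLike.mem_coe, LinearMap.mem_ker, mul_assoc]
    erw [LinearMap.mem_ker, map_sub, TensorProduct.lift.tmul, TensorProduct.lift.tmul]
    simp [mul_assoc])

/-- Left multiplication by `b` on `B ⊗[A] B`. -/
noncomputable def sepLMul (φ : A →+* B) (b : B) : SepTensor φ →ₗ[ℤ] SepTensor φ :=
  Submodule.mapQ _ _ (TensorProduct.map (LinearMap.mulLeft ℤ b) LinearMap.id) (by
    rw [sepRel, Submodule.span_le]
    rintro x ⟨b₀, b', a, rfl⟩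
    simp only [SetLike.mem_coe, Submodule.mem_comap, map_sub, TensorProduct.map_tmul,
      LinearMap.mulLeft_apply, LinearMap.id_apply]
    exact Submodule.subset_span ⟨b * b₀, b', a, by
      erw [map_sub, TensorProduct.map_tmul, TensorProduct.map_tmul]; simp [mul_assoc]⟩)

/-- Right multiplication by `b` on `B ⊗[A] B`. -/
noncomputable def sepRMul (φ : A →+* B) (b : B) : SepTensor φ →ₗ[ℤ] SepTensor φ :=
  Submodule.mapQ _ _ (TensorProduct.map LinearMap.id (LinearMap.mulRight ℤ b)) (by
    rw [sepRel, Submodule.span_le]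
    rintro x ⟨b₀, b', a, rfl⟩
    simp only [SetLike.mem_coe, Submodule.mem_comap, map_sub, TensorProduct.map_tmul,
      LinearMap.mulRight_apply, LinearMap.id_apply]
    exact Submodule.subset_span ⟨b₀, b' * b, a, by
      erw [map_sub, TensorProduct.map_tmul, TensorProduct.map_tmul]; simp [mul_assoc]⟩)

/-- The grading on `B ⊗[A] B`: the degree `n` part is generated by the classes of
`b ⊗ b'` with `b, b'` homogeneous of degrees summing to `n`. -/
noncomputable def sepGrading (φ : A →+* B) (𝒝 : ℤ → AddSubgroup B) (n : ℤ) :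
    AddSubgroup (SepTensor φ) :=
  AddSubgroup.closure {x | ∃ (i j : ℤ) (b b' : B), b ∈ 𝒝 i ∧ b' ∈ 𝒝 j ∧ i + j = n ∧
    x = sepMk φ (b ⊗ₜ[ℤ] b')}

/-- The sign involution `b ↦ (-1)^{|b|} b` of a graded ring. -/
noncomputable def signMap (𝒝 : ℤ → AddSubgroup B) [GradedRing 𝒝] : B →+ B :=
  (DirectSum.toAddMonoid fun i =>
      (smulAddHom ℤ B ((Int.negOnePow i : ℤ))).comp (𝒝 i).subtype).comp
    (DirectSum.decomposeAddEquiv 𝒝).toAddMonoidHom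

lemma signMap_of_mem (𝒝 : ℤ → AddSubgroup B) [GradedRing 𝒝] {i : ℤ} {x : B}
    (hx : x ∈ 𝒝 i) : signMap 𝒝 x = ((Int.negOnePow i : ℤ)) • x := by
  classical
  unfold signMap
  simp only [AddMonoidHom.comp_apply, AddEquiv.coe_toAddMonoidHom,
    DirectSum.decomposeAddEquiv_apply, DirectSum.decompose_of_mem 𝒝 hx,
    DirectSum.toAddMonoid_of]
  rfl

/-- The differential `d ⊗ 1 + ε ⊗ d` on `B ⊗[ℤ] B` (with Koszul sign). -/
noncomputable def sepDiffPre (𝒝 : ℤ → AddSubgroup B) [GradedRing 𝒝] (dB : B →+ B) :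
    B ⊗[ℤ] B →ₗ[ℤ] B ⊗[ℤ] B :=
  TensorProduct.map dB.toIntLinearMap LinearMap.id +
    TensorProduct.map (signMap 𝒝).toIntLinearMap dB.toIntLinearMap

/-- `D` is the differential induced on `B ⊗[A] B` by `d_B ⊗ 1 + ε ⊗ d_B`. -/
def IsSepDiff (φ : A →+* B) (𝒝 : ℤ → AddSubgroup B) [GradedRing 𝒝] (dB : B →+ B)
    (D : SepTensor φ →+ SepTensor φ) : Prop :=
  ∀ x : B ⊗[ℤ] B, D (sepMk φ x) = sepMk φ (sepDiffPre 𝒝 dB x)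

/-- `ρ : B → B ⊗[A] B` is a `B`-`B`-bimodule section of the multiplication map. -/
def IsSepSection (φ : A →+* B) (ρ : B →+ SepTensor φ) : Prop :=
  (∀ b, sepMul φ (ρ b) = b) ∧
    (∀ (b₁ c b₂ : B), ρ (b₁ * c * b₂) = sepLMul φ b₁ (sepRMul φ b₂ (ρ c)))

/-- The extension `φ : A →+* B` is separable: the multiplication map
`B ⊗[A] B → B` splits as a bimodule map. -/
def IsSeparableExt (φ : A →+* B) : Prop := ∃ ρ : B →+ SepTensor φ, IsSepSection φ ρ

/-- The extension `φ : A →+* B` of graded rings is graded-separable: the multiplication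
map `B ⊗[A] B → B` splits as a map of graded bimodules. -/
def IsGrSeparable (φ : A →+* B) (𝒝 : ℤ → AddSubgroup B) : Prop :=
  ∃ ρ : B →+ SepTensor φ, IsSepSection φ ρ ∧
    ∀ (n : ℤ), ∀ b ∈ 𝒝 n, ρ b ∈ sepGrading φ 𝒝 n

/-- The dg-extension `φ : (A,d_A) →  (B,d_B)` is dg-separable: the multiplication map
`B ⊗[A] B → B` splits as a map of differential graded bimodules. -/
def IsDGSeparable (φ : A →+* B) (𝒝 : ℤ → AddSubgroup B) [GradedRing 𝒝]
    (dB : B →+ B) : Prop :=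
  ∃ D : SepTensor φ →+ SepTensor φ, IsSepDiff φ 𝒝 dB D ∧
    ∃ ρ : B →+ SepTensor φ, IsSepSection φ ρ ∧
      (∀ (n : ℤ), ∀ b ∈ 𝒝 n, ρ b ∈ sepGrading φ 𝒝 n) ∧
      (∀ b, D (ρ b) = ρ (dB b))

end DGCore

section Cycles

variable {A : Type} [Ring A] {B : Type} [Ring B]

lemma IsDGRing.leibniz_total {𝒜 : ℤ → AddSubgroup A} [GradedRing 𝒜] {d : A →+ A}
    (h : IsDGRing 𝒜 d) (a b : A) :
    d (a * b) = d a * b + signMap 𝒜 a * d b := by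
  induction a using DirectSum.Decomposition.inductionOn 𝒜 with
  | zero => simp
  | @homogeneous i x =>
      obtain ⟨x, hx⟩ := x
      rw [h.leibniz i x b hx, signMap_of_mem 𝒜 hx, smul_mul_assoc]
  | add a a' ha ha' =>
      rw [add_mul, map_add, ha, ha', map_add, map_add, add_mul, add_mul]
      abel

/-- The subring of cycles `ker d` of a dg-ring `(A, d)`. -/
def cyclesSubring (𝒜 : ℤ → AddSubgroup A) [GradedRing 𝒜] (d : A →+ A)
    (h : IsDGRing 𝒜 d) : Subring A where
  carrier := {x | d x = 0}
  zero_mem' := map_zero d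
  add_mem' := by
    intro x y hx hy
    simp only [Set.mem_setOf_eq] at *
    rw [map_add, hx, hy, add_zero]
  neg_mem' := by
    intro x hx
    simp only [Set.mem_setOf_eq] at *
    rw [map_neg, hx, neg_zero]
  one_mem' := by
    have h2 : d ((1 : A) * 1) = d 1 * 1 + ((Int.negOnePow 0 : ℤ)) • ((1 : A) * d 1) :=
      h.leibniz 0 1 1 (SetLike.one_mem_graded 𝒜)
    simp only [one_mul, mul_one, Int.negOnePow_zero, Units.val_one, one_smul] at h2
    have h3 : d (1 : A) + 0 = d 1 + d 1 := by rw [add_zero]; exact h2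
    exact (add_left_cancel h3).symm
  mul_mem' := by
    intro x y hx hy
    simp only [Set.mem_setOf_eq] at *
    rw [h.leibniz_total x y, hx, hy, zero_mul, mul_zero, add_zero]

/-- The grading on the subring of cycles, inherited from the ambient graded ring. -/
def cyclesGrading (𝒜 : ℤ → AddSubgroup A) [GradedRing 𝒜] (d : A →+ A)
    (h : IsDGRing 𝒜 d) : ℤ → AddSubgroup (cyclesSubring 𝒜 d h) :=
  fun i => (𝒜 i).comap (cyclesSubring 𝒜 d h).subtype.toAddMonoidHom

end Cycles

section AuxInfra

variable {A : Type} [Ring A] {B : Type} [Ring B]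

lemma sep_induction {φ : A →+* B} {P : SepTensor φ → Prop}
    (h0 : P 0) (ht : ∀ b b' : B, P (sepMk φ (b ⊗ₜ[ℤ] b')))
    (hadd : ∀ x y, P x → P y → P (x + y)) (t : SepTensor φ) : P t := by
  obtain ⟨x, rfl⟩ := Submodule.mkQ_surjective (sepRel φ) t
  show P (sepMk φ x)
  induction x using TensorProduct.induction_on with
  | zero => simpa using h0
  | tmul b b' => exact ht b b'
  | add x y hx hy => rw [map_add]; exact hadd _ _ hx hy

lemma sepMul_mk (φ : A →+* B) (b b' : B) :
    sepMul φ (sepMk φ (b ⊗ₜ[ℤ] b')) = b * b' := by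
  show TensorProduct.lift (LinearMap.mul ℤ B) (b ⊗ₜ[ℤ] b') = b * b'
  erw [TensorProduct.lift.tmul]; rfl

lemma sepLMul_mk (φ : A →+* B) (c b b' : B) :
    sepLMul φ c (sepMk φ (b ⊗ₜ[ℤ] b')) = sepMk φ ((c * b) ⊗ₜ[ℤ] b') := by
  show sepMk φ (TensorProduct.map (LinearMap.mulLeft ℤ c) LinearMap.id (b ⊗ₜ[ℤ] b')) = _
  erw [TensorProduct.map_tmul]; rfl

lemma sepRMul_mk (φ : A →+* B) (c b b' : B) :
    sepRMul φ c (sepMk φ (b ⊗ₜ[ℤ] b')) = sepMk φ (b ⊗ₜ[ℤ] (b' * c)) := by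
  show sepMk φ (TensorProduct.map LinearMap.id (LinearMap.mulRight ℤ c) (b ⊗ₜ[ℤ] b')) = _
  erw [TensorProduct.map_tmul]; rfl

lemma sepMk_rel (φ : A →+* B) (b b' : B) (a : A) :
    sepMk φ ((b * φ a) ⊗ₜ[ℤ] b') = sepMk φ (b ⊗ₜ[ℤ] (φ a * b')) := by
  rw [sepMk, Submodule.mkQ_apply, Submodule.mkQ_apply, Submodule.Quotient.eq]
  exact Submodule.subset_span ⟨b, b', a, rfl⟩

lemma sepLMul_one (φ : A →+* B) (t : SepTensor φ) : sepLMul φ 1 t = t := by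
  induction t using sep_induction with
  | h0 => simp
  | ht b b' => rw [sepLMul_mk, one_mul]
  | hadd x y hx hy => rw [map_add, hx, hy]

lemma sepRMul_one (φ : A →+* B) (t : SepTensor φ) : sepRMul φ 1 t = t := by
  induction t using sep_induction with
  | h0 => simp
  | ht b b' => rw [sepRMul_mk, mul_one]
  | hadd x y hx hy => rw [map_add, hx, hy]

lemma sepLMul_mul (φ : A →+* B) (x y : B) (t : SepTensor φ) :
    sepLMul φ (x * y) t = sepLMul φ x (sepLMul φ y t) := by
  induction t using sep_induction with
  | h0 => simp
  | ht b b' => rw [sepLMul_mk, sepLMul_mk, sepLMul_mk, mul_assoc]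
  | hadd u v hu hv => rw [map_add, map_add, map_add, hu, hv]

lemma sepRMul_mul (φ : A →+* B) (x y : B) (t : SepTensor φ) :
    sepRMul φ (x * y) t = sepRMul φ y (sepRMul φ x t) := by
  induction t using sep_induction with
  | h0 => simp
  | ht b b' => rw [sepRMul_mk, sepRMul_mk, sepRMul_mk, mul_assoc]
  | hadd u v hu hv => rw [map_add, map_add, map_add, hu, hv]

lemma sepLMul_sepRMul (φ : A →+* B) (x y : B) (t : SepTensor φ) :
    sepLMul φ x (sepRMul φ y t) = sepRMul φ y (sepLMul φ x t) := by
  induction t using sep_induction with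
  | h0 => simp
  | ht b b' => rw [sepRMul_mk, sepLMul_mk, sepLMul_mk, sepRMul_mk]
  | hadd u v hu hv => simp only [map_add, hu, hv]

lemma sepLMul_addElem (φ : A →+* B) (x y : B) (t : SepTensor φ) :
    sepLMul φ (x + y) t = sepLMul φ x t + sepLMul φ y t := by
  induction t using sep_induction with
  | h0 => simp
  | ht b b' => rw [sepLMul_mk, sepLMul_mk, sepLMul_mk, add_mul, ← map_add,
      TensorProduct.add_tmul]
  | hadd u v hu hv =>
      rw [map_add, map_add, map_add, hu, hv]; abel

lemma sepRMul_addElem (φ : A →+* B) (x y : B) (t : SepTensor φ) :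
    sepRMul φ (x + y) t = sepRMul φ x t + sepRMul φ y t := by
  induction t using sep_induction with
  | h0 => simp
  | ht b b' => rw [sepRMul_mk, sepRMul_mk, sepRMul_mk, mul_add, ← map_add,
      TensorProduct.tmul_add]
  | hadd u v hu hv =>
      rw [map_add, map_add, map_add, hu, hv]; abel

lemma sepMul_sepLMul (φ : A →+* B) (x : B) (t : SepTensor φ) :
    sepMul φ (sepLMul φ x t) = x * sepMul φ t := by
  induction t using sep_induction with
  | h0 => simp
  | ht b b' => rw [sepLMul_mk, sepMul_mk, sepMul_mk, mul_assoc]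
  | hadd u v hu hv => rw [map_add, map_add, map_add, hu, hv, mul_add]

lemma sepMul_sepRMul (φ : A →+* B) (x : B) (t : SepTensor φ) :
    sepMul φ (sepRMul φ x t) = sepMul φ t * x := by
  induction t using sep_induction with
  | h0 => simp
  | ht b b' => rw [sepRMul_mk, sepMul_mk, sepMul_mk, mul_assoc]
  | hadd u v hu hv => rw [map_add, map_add, map_add, hu, hv, add_mul]

lemma signMap_mul (𝒝 : ℤ → AddSubgroup B) [GradedRing 𝒝] (x y : B) :
    signMap 𝒝 (x * y) = signMap 𝒝 x * signMap 𝒝 y := by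
  induction x using DirectSum.Decomposition.inductionOn 𝒝 with
  | zero => simp
  | @homogeneous i m =>
      obtain ⟨m, hm⟩ := m
      induction y using DirectSum.Decomposition.inductionOn 𝒝 with
      | zero => simp
      | @homogeneous j m' =>
          obtain ⟨m', hm'⟩ := m'
          rw [signMap_of_mem 𝒝 hm, signMap_of_mem 𝒝 hm',
            signMap_of_mem 𝒝 (SetLike.mul_mem_graded hm hm'), Int.negOnePow_add,
            smul_mul_assoc, mul_smul_comm, smul_smul, Units.val_mul]
      | add y y' hy hy' =>
          rw [mul_add, map_add, hy, hy', map_add, mul_add]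
  | add x x' hx hx' =>
      rw [add_mul, map_add, hx, hx', map_add, add_mul]

lemma signMap_one (𝒝 : ℤ → AddSubgroup B) [GradedRing 𝒝] : signMap 𝒝 (1 : B) = 1 := by
  rw [signMap_of_mem 𝒝 (SetLike.one_mem_graded 𝒝)]
  simp

lemma signMap_comm_hom (𝒜 : ℤ → AddSubgroup A) [GradedRing 𝒜]
    (𝒝 : ℤ → AddSubgroup B) [GradedRing 𝒝] {dA : A →+ A} {dB : B →+ B} {φ : A →+* B}
    (hφ : IsDGHom 𝒜 dA 𝒝 dB φ) (a : A) :
    signMap 𝒝 (φ a) = φ (signMap 𝒜 a) := by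
  induction a using DirectSum.Decomposition.inductionOn 𝒜 with
  | zero => simp
  | @homogeneous i m =>
      obtain ⟨m, hm⟩ := m
      rw [signMap_of_mem 𝒜 hm, signMap_of_mem 𝒝 (hφ.map_mem i m hm), map_zsmul]
  | add a a' ha ha' => simp only [map_add, ha, ha']

lemma d_one {𝒜 : ℤ → AddSubgroup A} [GradedRing 𝒜] {d : A →+ A}
    (h : IsDGRing 𝒜 d) : d (1 : A) = 0 := by
  have h2 : d ((1 : A) * 1) = d 1 * 1 + ((Int.negOnePow 0 : ℤ)) • ((1 : A) * d 1) :=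
    h.leibniz 0 1 1 (SetLike.one_mem_graded 𝒜)
  simp only [one_mul, mul_one, Int.negOnePow_zero, Units.val_one, one_smul] at h2
  have h3 : d (1 : A) + 0 = d 1 + d 1 := by rw [add_zero]; exact h2
  exact (add_left_cancel h3).symm

lemma mul_w_eq {𝒝 : ℤ → AddSubgroup B} [GradedRing 𝒝] (hBcomm : IsGradedComm 𝒝)
    {w : B} (hw : w ∈ 𝒝 (-1)) (b : B) : b * w = w * signMap 𝒝 b := by
  induction b using DirectSum.Decomposition.inductionOn 𝒝 with
  | zero => simp
  | @homogeneous i m =>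
      obtain ⟨m, hm⟩ := m
      rw [hBcomm i (-1) m w hm hw, signMap_of_mem 𝒝 hm, mul_smul_comm]
      congr 1
      rw [mul_neg_one, Int.negOnePow_neg]
  | add b b' hb hb' => rw [add_mul, hb, hb', map_add, mul_add]

lemma decompose_d {𝒜 : ℤ → AddSubgroup A} [GradedRing 𝒜] {dA : A →+ A}
    (hA : IsDGRing 𝒜 dA) (x : A) (i : ℤ) :
    (DirectSum.decompose 𝒜 (dA x) i : A) = dA (DirectSum.decompose 𝒜 x (i - 1) : A) := by
  induction x using DirectSum.Decomposition.inductionOn 𝒜 with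
  | zero => simp
  | @homogeneous j m =>
      obtain ⟨m, hm⟩ := m
      by_cases hij : i = j + 1
      · subst hij
        rw [DirectSum.decompose_of_mem_same 𝒜 (hA.d_mem j m hm)]
        rw [show j + 1 - 1 = j by ring, DirectSum.decompose_of_mem_same 𝒜 hm]
      · rw [DirectSum.decompose_of_mem_ne 𝒜 (hA.d_mem j m hm) (fun h => hij h.symm),
          DirectSum.decompose_of_mem_ne 𝒜 hm (fun h => hij (by omega)), map_zero]
  | add a a' ha ha' =>
      rw [map_add, DirectSum.decompose_add, DirectSum.decompose_add,
        DirectSum.add_apply, DirectSum.add_apply, AddSubgroup.coe_add,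
        AddSubgroup.coe_add, ha, ha', map_add]

/-- Left multiplication by a homogeneous element respects the grading on `B ⊗[A] B`. -/
lemma sepLMul_mem_grading (φ : A →+* B) (𝒝 : ℤ → AddSubgroup B)
    (hmul : ∀ (i j : ℤ) (x y : B), x ∈ 𝒝 i → y ∈ 𝒝 j → x * y ∈ 𝒝 (i + j))
    {i n : ℤ} {b : B} (hb : b ∈ 𝒝 i) {t : SepTensor φ}
    (ht : t ∈ sepGrading φ 𝒝 n) : sepLMul φ b t ∈ sepGrading φ 𝒝 (i + n) := by
  induction ht using AddSubgroup.closure_induction with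
  | mem x hx =>
      obtain ⟨j, k, c, c', hc, hc', hjk, rfl⟩ := hx
      rw [sepLMul_mk]
      exact AddSubgroup.subset_closure
        ⟨i + j, k, b * c, c', hmul i j b c hb hc, hc', by omega, rfl⟩
  | zero => rw [map_zero]; exact zero_mem _
  | add x y _ _ hx hy => rw [map_add]; exact add_mem hx hy
  | neg x _ hx => rw [map_neg]; exact neg_mem hx

lemma sepRMul_mem_grading (φ : A →+* B) (𝒝 : ℤ → AddSubgroup B) [GradedRing 𝒝]
    {i n : ℤ} {b : B} (hb : b ∈ 𝒝 i) {t : SepTensor φ}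
    (ht : t ∈ sepGrading φ 𝒝 n) : sepRMul φ b t ∈ sepGrading φ 𝒝 (n + i) := by
  induction ht using AddSubgroup.closure_induction with
  | mem x hx =>
      obtain ⟨j, k, c, c', hc, hc', hjk, rfl⟩ := hx
      rw [sepRMul_mk]
      exact AddSubgroup.subset_closure
        ⟨j, k + i, c, c' * b, hc, SetLike.mul_mem_graded hc' hb, by omega, rfl⟩
  | zero => rw [map_zero]; exact zero_mem _
  | add x y _ _ hx hy => rw [map_add]; exact add_mem hx hy
  | neg x _ hx => rw [map_neg]; exact neg_mem hx

/-- On the degree-zero part of `B ⊗[A] B`, left and right multiplication by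
`w = φ z` (homogeneous of degree `-1`) agree. -/
lemma sepLMul_w_eq_sepRMul_w (φ : A →+* B) (𝒝 : ℤ → AddSubgroup B) [GradedRing 𝒝]
    (hBcomm : IsGradedComm 𝒝) {z : A} (hz : φ z ∈ 𝒝 (-1)) {t : SepTensor φ}
    (ht : t ∈ sepGrading φ 𝒝 0) : sepLMul φ (φ z) t = sepRMul φ (φ z) t := by
  induction ht using AddSubgroup.closure_induction with
  | mem x hx =>
      obtain ⟨i, j, b, b', hb, hb', hij, rfl⟩ := hx
      have hj : j = -i := by omega
      subst hj
      rw [sepLMul_mk, sepRMul_mk, hBcomm (-1) i (φ z) b hz hb,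
        mul_w_eq hBcomm hz b', signMap_of_mem 𝒝 hb', mul_smul_comm,
        ← TensorProduct.smul_tmul', TensorProduct.tmul_smul, map_zsmul, map_zsmul,
        sepMk_rel φ b b' z, show (-1) * i = -i by ring]
  | zero => simp
  | add x y _ _ hx hy => simp only [map_add, hx, hy]
  | neg x _ hx => simp only [map_neg, hx]

lemma mem_cyclesSubring {𝒜 : ℤ → AddSubgroup A} [GradedRing 𝒜] {d : A →+ A}
    {h : IsDGRing 𝒜 d} {x : A} : x ∈ cyclesSubring 𝒜 d h ↔ d x = 0 := Iff.rfl

lemma mem_cyclesGrading {𝒜 : ℤ → AddSubgroup A} [GradedRing 𝒜] {d : A →+ A}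
    {h : IsDGRing 𝒜 d} {x : cyclesSubring 𝒜 d h} {i : ℤ} :
    x ∈ cyclesGrading 𝒜 d h i ↔ (x : A) ∈ 𝒜 i := Iff.rfl

lemma sepDiffPre_tmul (𝒝 : ℤ → AddSubgroup B) [GradedRing 𝒝] (dB : B →+ B) (x y : B) :
    sepDiffPre 𝒝 dB (x ⊗ₜ[ℤ] y) = dB x ⊗ₜ[ℤ] y + signMap 𝒝 x ⊗ₜ[ℤ] dB y := by
  simp [sepDiffPre]
  erw [LinearMap.add_apply, TensorProduct.map_tmul, TensorProduct.map_tmul]; rfl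

section Diff

variable {𝒜 : ℤ → AddSubgroup A} [GradedRing 𝒜] {𝒝 : ℤ → AddSubgroup B} [GradedRing 𝒝]
variable {dA : A →+ A} {dB : B →+ B} {φ : A →+* B}

lemma sepDiffPre_comap (hB : IsDGRing 𝒝 dB) (hφ : IsDGHom 𝒜 dA 𝒝 dB φ) :
    sepRel φ ≤ (sepRel φ).comap (sepDiffPre 𝒝 dB) := by
  rw [sepRel, Submodule.span_le]
  rintro x ⟨b, b', a, rfl⟩
  simp only [SetLike.mem_coe, Submodule.mem_comap]
  have h1 : (dB b * φ a) ⊗ₜ[ℤ] b' - dB b ⊗ₜ[ℤ] (φ a * b') ∈ sepRel φ :=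
    Submodule.subset_span ⟨dB b, b', a, rfl⟩
  have h2 : (signMap 𝒝 b * φ (dA a)) ⊗ₜ[ℤ] b' -
      signMap 𝒝 b ⊗ₜ[ℤ] (φ (dA a) * b') ∈ sepRel φ :=
    Submodule.subset_span ⟨signMap 𝒝 b, b', dA a, rfl⟩
  have h3 : (signMap 𝒝 b * φ (signMap 𝒜 a)) ⊗ₜ[ℤ] dB b' -
      signMap 𝒝 b ⊗ₜ[ℤ] (φ (signMap 𝒜 a) * dB b') ∈ sepRel φ :=
    Submodule.subset_span ⟨signMap 𝒝 b, dB b', signMap 𝒜 a, rfl⟩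
  have key : sepDiffPre 𝒝 dB ((b * φ a) ⊗ₜ[ℤ] b' - b ⊗ₜ[ℤ] (φ a * b')) =
      ((dB b * φ a) ⊗ₜ[ℤ] b' - dB b ⊗ₜ[ℤ] (φ a * b')) +
      ((signMap 𝒝 b * φ (dA a)) ⊗ₜ[ℤ] b' - signMap 𝒝 b ⊗ₜ[ℤ] (φ (dA a) * b')) +
      ((signMap 𝒝 b * φ (signMap 𝒜 a)) ⊗ₜ[ℤ] dB b' -
        signMap 𝒝 b ⊗ₜ[ℤ] (φ (signMap 𝒜 a) * dB b')) := by
    rw [map_sub, sepDiffPre_tmul, sepDiffPre_tmul, hB.leibniz_total b (φ a),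
      ← hφ.map_d, signMap_mul, signMap_comm_hom 𝒜 𝒝 hφ, hB.leibniz_total (φ a) b',
      ← hφ.map_d, signMap_comm_hom 𝒜 𝒝 hφ, TensorProduct.add_tmul,
      TensorProduct.tmul_add]
    abel
  rw [key]
  exact add_mem (add_mem h1 h2) h3

/-- The induced differential on `B ⊗[A] B`, as a linear map. -/
noncomputable def sepDiff (hB : IsDGRing 𝒝 dB) (hφ : IsDGHom 𝒜 dA 𝒝 dB φ) :
    SepTensor φ →ₗ[ℤ] SepTensor φ :=
  Submodule.mapQ _ _ (sepDiffPre 𝒝 dB) (sepDiffPre_comap hB hφ)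

lemma sepDiff_mk (hB : IsDGRing 𝒝 dB) (hφ : IsDGHom 𝒜 dA 𝒝 dB φ) (x : B ⊗[ℤ] B) :
    sepDiff hB hφ (sepMk φ x) = sepMk φ (sepDiffPre 𝒝 dB x) := by
  simp [sepDiff, sepMk]

lemma sepDiff_lmul (hB : IsDGRing 𝒝 dB) (hφ : IsDGHom 𝒜 dA 𝒝 dB φ) (b : B)
    (t : SepTensor φ) :
    sepDiff hB hφ (sepLMul φ b t) =
      sepLMul φ (dB b) t + sepLMul φ (signMap 𝒝 b) (sepDiff hB hφ t) := by
  induction t using sep_induction with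
  | h0 => simp
  | ht c c' =>
      simp only [sepLMul_mk, sepDiff_mk, sepDiffPre_tmul, hB.leibniz_total,
        signMap_mul, TensorProduct.add_tmul, map_add, sepLMul_mk]
      abel
  | hadd u v hu hv =>
      simp only [map_add, hu, hv]
      abel

end Diff

section CJ

variable {𝒜 : ℤ → AddSubgroup A} [GradedRing 𝒜] {𝒝 : ℤ → AddSubgroup B} [GradedRing 𝒝]
variable {dA : A →+ A} {dB : B →+ B}

/-- The map `Z(B) ⊗[Z(A)] Z(B) → B ⊗[A] B` induced by the inclusion of cycles. -/
noncomputable def cj (hA : IsDGRing 𝒜 dA) (hB : IsDGRing 𝒝 dB)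
    (ψ : cyclesSubring 𝒜 dA hA →+* cyclesSubring 𝒝 dB hB) (φ : A →+* B)
    (hψ : ∀ x : cyclesSubring 𝒜 dA hA, (ψ x : B) = φ (x : A)) :
    SepTensor ψ →ₗ[ℤ] SepTensor φ :=
  Submodule.mapQ _ _ (TensorProduct.map
    (cyclesSubring 𝒝 dB hB).subtype.toAddMonoidHom.toIntLinearMap
    (cyclesSubring 𝒝 dB hB).subtype.toAddMonoidHom.toIntLinearMap) (by
      rw [sepRel, Submodule.span_le]
      rintro x ⟨c, c', a, rfl⟩
      simp only [SetLike.mem_coe, Submodule.mem_comap, map_sub,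
        TensorProduct.map_tmul, AddMonoidHom.coe_toIntLinearMap,
        RingHom.toAddMonoidHom_eq_coe, AddMonoidHom.coe_coe]
      have e1 : ((c * ψ a : cyclesSubring 𝒝 dB hB) : B) = (c : B) * φ (a : A) := by
        push_cast [hψ a]; rfl
      have e2 : ((ψ a * c' : cyclesSubring 𝒝 dB hB) : B) = φ (a : A) * (c' : B) := by
        push_cast [hψ a]; rfl
      show ((c * ψ a : cyclesSubring 𝒝 dB hB) : B) ⊗ₜ[ℤ] (c' : B) -
        (c : B) ⊗ₜ[ℤ] ((ψ a * c' : cyclesSubring 𝒝 dB hB) : B) ∈ sepRel φ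
      rw [e1, e2]
      exact Submodule.subset_span ⟨(c : B), (c' : B), (a : A), rfl⟩)

variable {hA : IsDGRing 𝒜 dA} {hB : IsDGRing 𝒝 dB}
variable {ψ : cyclesSubring 𝒜 dA hA →+* cyclesSubring 𝒝 dB hB} {φ : A →+* B}
variable (hψ : ∀ x : cyclesSubring 𝒜 dA hA, (ψ x : B) = φ (x : A))

lemma cj_mk (c c' : cyclesSubring 𝒝 dB hB) :
    cj hA hB ψ φ hψ (sepMk ψ (c ⊗ₜ[ℤ] c')) = sepMk φ ((c : B) ⊗ₜ[ℤ] (c' : B)) := by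
  show sepMk φ (TensorProduct.map
    (cyclesSubring 𝒝 dB hB).subtype.toAddMonoidHom.toIntLinearMap
    (cyclesSubring 𝒝 dB hB).subtype.toAddMonoidHom.toIntLinearMap (c ⊗ₜ[ℤ] c')) = _
  erw [TensorProduct.map_tmul]; rfl

lemma sepMul_cj (t : SepTensor ψ) :
    sepMul φ (cj hA hB ψ φ hψ t) = ((sepMul ψ t : cyclesSubring 𝒝 dB hB) : B) := by
  induction t using sep_induction with
  | h0 => simp
  | ht c c' => rw [cj_mk, sepMul_mk, sepMul_mk]; norm_cast
  | hadd u v hu hv => simp only [map_add, hu, hv]; norm_cast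

lemma cj_lmul (c : cyclesSubring 𝒝 dB hB) (t : SepTensor ψ) :
    cj hA hB ψ φ hψ (sepLMul ψ c t) = sepLMul φ (c : B) (cj hA hB ψ φ hψ t) := by
  induction t using sep_induction with
  | h0 => simp
  | ht b b' =>
      rw [sepLMul_mk, cj_mk, cj_mk, sepLMul_mk]
      norm_cast
  | hadd u v hu hv => simp only [map_add, hu, hv]

lemma cj_rmul (c : cyclesSubring 𝒝 dB hB) (t : SepTensor ψ) :
    cj hA hB ψ φ hψ (sepRMul ψ c t) = sepRMul φ (c : B) (cj hA hB ψ φ hψ t) := by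
  induction t using sep_induction with
  | h0 => simp
  | ht b b' =>
      rw [sepRMul_mk, cj_mk, cj_mk, sepRMul_mk]
      norm_cast
  | hadd u v hu hv => simp only [map_add, hu, hv]

lemma cj_grading {n : ℤ} {t : SepTensor ψ}
    (ht : t ∈ sepGrading ψ (cyclesGrading 𝒝 dB hB) n) :
    cj hA hB ψ φ hψ t ∈ sepGrading φ 𝒝 n := by
  induction ht using AddSubgroup.closure_induction with
  | mem x hx =>
      obtain ⟨i, j, c, c', hc, hc', hij, rfl⟩ := hx
      rw [cj_mk]
      exact AddSubgroup.subset_closure ⟨i, j, (c : B), (c' : B), hc, hc', hij, rfl⟩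
  | zero => rw [map_zero]; exact zero_mem _
  | add x y _ _ hx hy => rw [map_add]; exact add_mem hx hy
  | neg x _ hx => rw [map_neg]; exact neg_mem hx

lemma sepDiff_cj (hφ : IsDGHom 𝒜 dA 𝒝 dB φ) (t : SepTensor ψ) :
    sepDiff hB hφ (cj hA hB ψ φ hψ t) = 0 := by
  induction t using sep_induction with
  | h0 => simp
  | ht c c' =>
      rw [cj_mk, sepDiff_mk, sepDiffPre_tmul, mem_cyclesSubring.mp c.2,
        mem_cyclesSubring.mp c'.2]
      simp
  | hadd u v hu hv => simp only [map_add, hu, hv, add_zero]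

end CJ

section ASide

variable {𝒜 : ℤ → AddSubgroup A} [GradedRing 𝒜] {dA : A →+ A}

lemma exists_z (hA : IsDGRing 𝒜 dA) (hAacyclic : IsAcyclic dA) :
    ∃ z : A, z ∈ 𝒜 (-1) ∧ dA z = 1 := by
  obtain ⟨z', hz'⟩ := hAacyclic 1 (d_one hA)
  refine ⟨(DirectSum.decompose 𝒜 z' (-1) : A), SetLike.coe_mem _, ?_⟩
  have h := decompose_d hA z' 0
  rw [hz', DirectSum.decompose_of_mem_same 𝒜 (SetLike.one_mem_graded 𝒜),
    show (0 : ℤ) - 1 = -1 by ring] at h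
  exact h.symm

lemma unit_of_cycle (hA : IsDGRing 𝒜 dA) (hAdiv : IsDGDivisionRing 𝒜 dA)
    {i : ℤ} {x : A} (hx : x ∈ 𝒜 i) (hdx : dA x = 0) (hx0 : x ≠ 0) :
    ∃ a, a * x = 1 := by
  set I : AddSubgroup A := (AddMonoidHom.mulRight x).range with hI
  have claim : ∀ (b : A) (j : ℤ), (DirectSum.decompose 𝒜 (b * x) j : A) ∈ I := by
    intro b j
    induction b using DirectSum.Decomposition.inductionOn 𝒜 with
    | zero => rw [zero_mul]; simpa using zero_mem I
    | @homogeneous k m =>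
        obtain ⟨m, hm⟩ := m
        by_cases hj : j = k + i
        · subst hj
          rw [DirectSum.decompose_of_mem_same 𝒜 (SetLike.mul_mem_graded hm hx)]
          exact ⟨m, by simp⟩
        · rw [DirectSum.decompose_of_mem_ne 𝒜 (SetLike.mul_mem_graded hm hx)
            (fun h => hj h.symm)]
          exact zero_mem I
    | add a a' ha ha' =>
        rw [add_mul, DirectSum.decompose_add, DirectSum.add_apply, AddSubgroup.coe_add]
        exact add_mem ha ha'
  have hIdg : IsDGLeftIdeal 𝒜 dA I := by
    refine ⟨?_, ?_, ?_⟩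
    · rintro a y ⟨b, rfl⟩
      exact ⟨a * b, by simp [mul_assoc]⟩
    · rintro y ⟨b, rfl⟩
      refine ⟨dA b, ?_⟩
      show dA b * x = dA (b * x)
      rw [hA.leibniz_total b x, hdx, mul_zero, add_zero]
      
    · rintro y ⟨b, rfl⟩ j
      exact claim b j
  rcases hAdiv.2.1 I hIdg with h | h
  · exfalso
    apply hx0
    have hxI : x ∈ I := ⟨1, one_mul x⟩
    rw [h] at hxI
    simpa using hxI
  · have h1 : (1 : A) ∈ I := by rw [h]; trivial
    exact h1

lemma z_sq_eq_zero (hA : IsDGRing 𝒜 dA) (hAcomm : IsGradedComm 𝒜)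
    (hAdiv : IsDGDivisionRing 𝒜 dA) (h2 : (2 : A) ≠ 0)
    {z : A} (hz : z ∈ 𝒜 (-1)) (hz1 : dA z = 1) : z * z = 0 := by
  have hmem : z * z ∈ 𝒜 (-2) := by
    have := SetLike.mul_mem_graded hz hz
    norm_num at this
    exact this
  have hd : dA (z * z) = 0 := by
    rw [hA.leibniz_total z z, hz1, one_mul, mul_one, signMap_of_mem 𝒜 hz]
    simp
  have hself : z * z + z * z = 0 := by
    have h := hAcomm (-1) (-1) z z hz hz
    rw [show ((-1 : ℤ)) * (-1) = 1 by ring, Int.negOnePow_one] at h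
    simp only [Units.val_neg, Units.val_one, neg_smul, one_smul] at h
    nth_rewrite 1 [h]
    exact neg_add_cancel _
  by_contra h0
  obtain ⟨a, ha⟩ := unit_of_cycle hA hAdiv hmem hd h0
  apply h2
  have key : (2 : A) = a * ((z * z) * 2) := by rw [← mul_assoc, ha, one_mul]
  rw [key, mul_two, hself, mul_zero]

end ASide

section EB

variable {𝒜 : ℤ → AddSubgroup A} [GradedRing 𝒜] {𝒝 : ℤ → AddSubgroup B} [GradedRing 𝒝]
variable {dA : A →+ A} {dB : B →+ B}

/-- The projection `b ↦ b - w * d b` of a contractible dg-ring onto its cycles. -/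
noncomputable def cycProj (hB : IsDGRing 𝒝 dB) (w : B) (hw1 : dB w = 1) :
    B →+ cyclesSubring 𝒝 dB hB :=
  AddMonoidHom.mk' (fun b => ⟨b - w * dB b, by
    show dB _ = 0
    rw [map_sub, hB.leibniz_total w (dB b), hw1, one_mul, hB.d_sq, mul_zero,
      add_zero, sub_self]⟩)
    (fun x y => by
      apply Subtype.ext
      show (x + y) - w * dB (x + y) = (x - w * dB x) + (y - w * dB y)
      rw [map_add, mul_add]
      abel)

lemma cycProj_coe (hB : IsDGRing 𝒝 dB) (w : B) (hw1 : dB w = 1) (b : B) :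
    ((cycProj hB w hw1 b : cyclesSubring 𝒝 dB hB) : B) = b - w * dB b := rfl

lemma eB_mul (hB : IsDGRing 𝒝 dB) (hBcomm : IsGradedComm 𝒝) {w : B}
    (hw : w ∈ 𝒝 (-1)) (hww : w * w = 0) (b b' : B) :
    b * b' - w * dB (b * b') = (b - w * dB b) * (b' - w * dB b') := by
  have h1 : b * (w * dB b') = w * (signMap 𝒝 b * dB b') := by
    rw [← mul_assoc, mul_w_eq hBcomm hw b, mul_assoc]
  have h2 : (w * dB b) * (w * dB b') = 0 := by
    rw [mul_assoc w (dB b), ← mul_assoc (dB b) w, mul_w_eq hBcomm hw (dB b),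
      ← mul_assoc w, ← mul_assoc w w, hww, zero_mul, zero_mul]
  rw [hB.leibniz_total b b', sub_mul, mul_sub, mul_sub, h1, h2]
  noncomm_ring

lemma eB_cycle (hB : IsDGRing 𝒝 dB) (w : B) {c : B} (hc : dB c = 0) :
    c - w * dB c = c := by rw [hc, mul_zero, sub_zero]

/-- The retraction `B ⊗[A] B → Z(B) ⊗[Z(A)] Z(B)` induced by `b ↦ b - w d b`
 (only well defined when `w² = 0`). -/
noncomputable def rproj (hA : IsDGRing 𝒜 dA) (hB : IsDGRing 𝒝 dB)
    (ψ : cyclesSubring 𝒜 dA hA →+* cyclesSubring 𝒝 dB hB) (φ : A →+* B)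
    (hψ : ∀ x : cyclesSubring 𝒜 dA hA, (ψ x : B) = φ (x : A))
    (hφ : IsDGHom 𝒜 dA 𝒝 dB φ) (hBcomm : IsGradedComm 𝒝)
    {z : A} (hz1 : dA z = 1) (hw : φ z ∈ 𝒝 (-1)) (hw1 : dB (φ z) = 1)
    (hww : φ z * φ z = 0) : SepTensor φ →ₗ[ℤ] SepTensor ψ :=
  Submodule.mapQ _ _ (TensorProduct.map
    (cycProj hB (φ z) hw1).toIntLinearMap (cycProj hB (φ z) hw1).toIntLinearMap) (by
      rw [sepRel, Submodule.span_le]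
      rintro x ⟨b, b', a, rfl⟩
      simp only [SetLike.mem_coe, Submodule.mem_comap, map_sub,
        TensorProduct.map_tmul, AddMonoidHom.coe_toIntLinearMap]
      set α := ψ (cycProj hA z hz1 a) with hα
      have hcoe : (α : B) = φ a - φ z * dB (φ a) := by
        rw [hα, hψ, cycProj_coe, map_sub, map_mul, hφ.map_d]
      have e1 : cycProj hB (φ z) hw1 (b * φ a) = cycProj hB (φ z) hw1 b * α := by
        apply Subtype.ext
        push_cast
        rw [cycProj_coe, cycProj_coe, hcoe]
        exact eB_mul hB hBcomm hw hww b (φ a)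
      have e2 : cycProj hB (φ z) hw1 (φ a * b') = α * cycProj hB (φ z) hw1 b' := by
        apply Subtype.ext
        push_cast
        rw [cycProj_coe, cycProj_coe, hcoe]
        exact eB_mul hB hBcomm hw hww (φ a) b'
      show TensorProduct.map (cycProj hB (φ z) hw1).toIntLinearMap
        (cycProj hB (φ z) hw1).toIntLinearMap ((b * φ a) ⊗ₜ[ℤ] b' - b ⊗ₜ[ℤ] (φ a * b')) ∈ sepRel ψ
      rw [map_sub, TensorProduct.map_tmul, TensorProduct.map_tmul]
      show cycProj hB (φ z) hw1 (b * φ a) ⊗ₜ[ℤ] cycProj hB (φ z) hw1 b' -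
        cycProj hB (φ z) hw1 b ⊗ₜ[ℤ] cycProj hB (φ z) hw1 (φ a * b') ∈ sepRel ψ
      rw [e1, e2]
      exact Submodule.subset_span
        ⟨cycProj hB (φ z) hw1 b, cycProj hB (φ z) hw1 b', cycProj hA z hz1 a, rfl⟩)

variable {hA : IsDGRing 𝒜 dA} {hB : IsDGRing 𝒝 dB}
variable {ψ : cyclesSubring 𝒜 dA hA →+* cyclesSubring 𝒝 dB hB} {φ : A →+* B}
variable (hψ : ∀ x : cyclesSubring 𝒜 dA hA, (ψ x : B) = φ (x : A))
variable (hφ : IsDGHom 𝒜 dA 𝒝 dB φ) (hBcomm : IsGradedComm 𝒝)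
variable {z : A} (hz1 : dA z = 1) (hw : φ z ∈ 𝒝 (-1)) (hw1 : dB (φ z) = 1)
variable (hww : φ z * φ z = 0)

lemma rproj_mk (b b' : B) :
    rproj hA hB ψ φ hψ hφ hBcomm hz1 hw hw1 hww (sepMk φ (b ⊗ₜ[ℤ] b')) =
      sepMk ψ (cycProj hB (φ z) hw1 b ⊗ₜ[ℤ] cycProj hB (φ z) hw1 b') := by
  show sepMk ψ (TensorProduct.map
    (cycProj hB (φ z) hw1).toIntLinearMap (cycProj hB (φ z) hw1).toIntLinearMap
    (b ⊗ₜ[ℤ] b')) = _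
  erw [TensorProduct.map_tmul]; rfl

lemma sepMul_rproj (t : SepTensor φ) :
    sepMul ψ (rproj hA hB ψ φ hψ hφ hBcomm hz1 hw hw1 hww t) =
      cycProj hB (φ z) hw1 (sepMul φ t) := by
  induction t using sep_induction with
  | h0 => simp
  | ht b b' =>
      rw [rproj_mk, sepMul_mk, sepMul_mk]
      apply Subtype.ext
      push_cast
      rw [cycProj_coe, cycProj_coe, cycProj_coe]
      exact (eB_mul hB hBcomm hw hww b b').symm
  | hadd u v hu hv => simp only [map_add, hu, hv]

lemma rproj_lmul (c : cyclesSubring 𝒝 dB hB) (t : SepTensor φ) :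
    rproj hA hB ψ φ hψ hφ hBcomm hz1 hw hw1 hww (sepLMul φ (c : B) t) =
      sepLMul ψ c (rproj hA hB ψ φ hψ hφ hBcomm hz1 hw hw1 hww t) := by
  induction t using sep_induction with
  | h0 => simp
  | ht b b' =>
      rw [sepLMul_mk, rproj_mk, rproj_mk, sepLMul_mk]
      have hfac : cycProj hB (φ z) hw1 ((c : B) * b) = c * cycProj hB (φ z) hw1 b := by
        apply Subtype.ext
        push_cast
        rw [cycProj_coe, cycProj_coe, eB_mul hB hBcomm hw hww (c : B) b,
          eB_cycle hB (φ z) (mem_cyclesSubring.mp c.2)]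
      rw [hfac]
  | hadd u v hu hv => simp only [map_add, hu, hv]

lemma rproj_rmul (c : cyclesSubring 𝒝 dB hB) (t : SepTensor φ) :
    rproj hA hB ψ φ hψ hφ hBcomm hz1 hw hw1 hww (sepRMul φ (c : B) t) =
      sepRMul ψ c (rproj hA hB ψ φ hψ hφ hBcomm hz1 hw hw1 hww t) := by
  induction t using sep_induction with
  | h0 => simp
  | ht b b' =>
      rw [sepRMul_mk, rproj_mk, rproj_mk, sepRMul_mk]
      have hfac : cycProj hB (φ z) hw1 (b' * (c : B)) = cycProj hB (φ z) hw1 b' * c := by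
        apply Subtype.ext
        push_cast
        rw [cycProj_coe, cycProj_coe, eB_mul hB hBcomm hw hww b' (c : B),
          eB_cycle hB (φ z) (mem_cyclesSubring.mp c.2)]
      rw [hfac]
  | hadd u v hu hv => simp only [map_add, hu, hv]

lemma rproj_grading (hBr : IsDGRing 𝒝 dB) {n : ℤ} {t : SepTensor φ}
    (ht : t ∈ sepGrading φ 𝒝 n) :
    rproj hA hB ψ φ hψ hφ hBcomm hz1 hw hw1 hww t ∈
      sepGrading ψ (cyclesGrading 𝒝 dB hB) n := by
  induction ht using AddSubgroup.closure_induction with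
  | mem x hx =>
      obtain ⟨i, j, b, b', hb, hb', hij, rfl⟩ := hx
      rw [rproj_mk]
      refine AddSubgroup.subset_closure
        ⟨i, j, cycProj hB (φ z) hw1 b, cycProj hB (φ z) hw1 b', ?_, ?_, hij, rfl⟩
      · rw [mem_cyclesGrading, cycProj_coe]
        refine sub_mem hb ?_
        have h := SetLike.mul_mem_graded hw (hB.d_mem i b hb)
        rwa [show (-1 : ℤ) + (i + 1) = i by ring] at h
      · rw [mem_cyclesGrading, cycProj_coe]
        refine sub_mem hb' ?_
        have h := SetLike.mul_mem_graded hw (hB.d_mem j b' hb')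
        rwa [show (-1 : ℤ) + (j + 1) = j by ring] at h
  | zero => rw [map_zero]; exact zero_mem _
  | add x y _ _ hx hy => rw [map_add]; exact add_mem hx hy
  | neg x _ hx => rw [map_neg]; exact neg_mem hx

end EB

end AuxInfra

/-- For graded commutative dg-division algebras with `(A,d_A)` acyclic:
if the restriction of `φ` to the cycles is a graded-separable extension then `φ` is
dg-separable, and in characteristic different from `2` the converse holds. -/
theorem dgSeparable_iff_cycles_grSeparable
    {A B : Type} [Ring A] [Ring B]
    (𝒜 : ℤ → AddSubgroup A) [GradedRing 𝒜] (𝒝 : ℤ → AddSubgroup B) [GradedRing 𝒝]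
    (dA : A →+ A) (dB : B →+ B)
    (hA : IsDGRing 𝒜 dA) (hB : IsDGRing 𝒝 dB)
    (hAcomm : IsGradedComm 𝒜) (hBcomm : IsGradedComm 𝒝)
    (hAdiv : IsDGDivisionRing 𝒜 dA) (hBdiv : IsDGDivisionRing 𝒝 dB)
    (hAacyclic : IsAcyclic dA)
    (φ : A →+* B) (hφ : IsDGHom 𝒜 dA 𝒝 dB φ)
    (ψ : cyclesSubring 𝒜 dA hA →+* cyclesSubring 𝒝 dB hB)
    (hψ : ∀ x : cyclesSubring 𝒜 dA hA, (ψ x : B) = φ (x : A)) :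
    (IsGrSeparable ψ (cyclesGrading 𝒝 dB hB) → IsDGSeparable φ 𝒝 dB) ∧
      ((2 : A) ≠ 0 →
        (IsDGSeparable φ 𝒝 dB → IsGrSeparable ψ (cyclesGrading 𝒝 dB hB))) := by
  obtain ⟨z, hz, hz1⟩ := exists_z hA hAacyclic
  have hw : φ z ∈ 𝒝 (-1) := hφ.map_mem (-1) z hz
  have hw1 : dB (φ z) = 1 := by rw [← hφ.map_d, hz1, map_one]
  constructor
  · -- graded separability of cycles implies dg separability
    rintro ⟨ρ₀, ⟨hρ₀μ, hρ₀bim⟩, hρ₀gr⟩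
    set e₀ := ρ₀ 1 with he₀
    have he₀l : ∀ c, sepLMul ψ c e₀ = ρ₀ c := by
      intro c
      have h := hρ₀bim c 1 1
      rw [mul_one, mul_one] at h
      rw [h, sepRMul_one]
    have he₀r : ∀ c, sepRMul ψ c e₀ = ρ₀ c := by
      intro c
      have h := hρ₀bim 1 1 c
      rw [one_mul, one_mul] at h
      rw [h, sepLMul_one]
    set e := cj hA hB ψ φ hψ e₀ with he
    have h1gr : (1 : cyclesSubring 𝒝 dB hB) ∈ cyclesGrading 𝒝 dB hB 0 := by
      rw [mem_cyclesGrading, OneMemClass.coe_one]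
      exact SetLike.one_mem_graded 𝒝
    have hegr : e ∈ sepGrading φ 𝒝 0 := cj_grading hψ (hρ₀gr 0 1 h1gr)
    have hce : ∀ c : cyclesSubring 𝒝 dB hB,
        sepLMul φ (c : B) e = sepRMul φ (c : B) e := by
      intro c
      rw [he, ← cj_lmul hψ, ← cj_rmul hψ, he₀l, he₀r]
    have hwe : sepLMul φ (φ z) e = sepRMul φ (φ z) e :=
      sepLMul_w_eq_sepRMul_w φ 𝒝 hBcomm hw hegr
    have hbe : ∀ b : B, sepLMul φ b e = sepRMul φ b e := by
      intro b
      have hc1 := hce (cycProj hB (φ z) hw1 b)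
      rw [cycProj_coe] at hc1
      have hc2 := hce ⟨dB b, hB.d_sq b⟩
      have hwdb : sepLMul φ (φ z * dB b) e = sepRMul φ (φ z * dB b) e := by
        rw [sepLMul_mul]
        rw [show sepLMul φ (dB b) e = sepRMul φ (dB b) e from hc2]
        rw [sepLMul_sepRMul, hwe, ← sepRMul_mul]
      have hsplit : sepLMul φ b e =
          sepLMul φ (b - φ z * dB b) e + sepLMul φ (φ z * dB b) e := by
        rw [← sepLMul_addElem, sub_add_cancel]
      rw [hsplit, hc1, hwdb, ← sepRMul_addElem, sub_add_cancel]
    have hμe : sepMul φ e = 1 := by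
      rw [he, sepMul_cj hψ, he₀, hρ₀μ 1, OneMemClass.coe_one]
    refine ⟨(sepDiff hB hφ).toAddMonoidHom, fun x => sepDiff_mk hB hφ x,
      AddMonoidHom.mk' (fun b => sepLMul φ b e)
        (fun x y => sepLMul_addElem φ x y e), ⟨?_, ?_⟩, ?_, ?_⟩
    · intro b
      show sepMul φ (sepLMul φ b e) = b
      rw [sepMul_sepLMul, hμe, mul_one]
    · intro b₁ c b₂
      show sepLMul φ (b₁ * c * b₂) e = sepLMul φ b₁ (sepRMul φ b₂ (sepLMul φ c e))
      rw [sepLMul_mul, sepLMul_mul, hbe b₂, ← sepLMul_sepRMul]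
    · intro n b hb
      show sepLMul φ b e ∈ sepGrading φ 𝒝 n
      have h := sepLMul_mem_grading φ 𝒝
        (fun _ _ _ _ hx hy => SetLike.mul_mem_graded hx hy) hb hegr
      rwa [add_zero] at h
    · intro b
      show sepDiff hB hφ (sepLMul φ b e) = sepLMul φ (dB b) e
      rw [sepDiff_lmul, he, sepDiff_cj hψ hφ, map_zero, add_zero]
  · -- dg separability implies graded separability of cycles
    rintro h2A ⟨D, _, ρ, ⟨hρμ, hρbim⟩, hρgr, _⟩
    have hzz : z * z = 0 := z_sq_eq_zero hA hAcomm hAdiv h2A hz hz1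
    have hww : φ z * φ z = 0 := by rw [← map_mul, hzz, map_zero]
    set e := ρ 1 with he
    have hel : ∀ b, sepLMul φ b e = ρ b := by
      intro b
      have h := hρbim b 1 1
      rw [mul_one, mul_one] at h
      rw [h, sepRMul_one]
    have her : ∀ b, sepRMul φ b e = ρ b := by
      intro b
      have h := hρbim 1 1 b
      rw [one_mul, one_mul] at h
      rw [h, sepLMul_one]
    have hegr : e ∈ sepGrading φ 𝒝 0 := hρgr 0 1 (SetLike.one_mem_graded 𝒝)
    set r := rproj hA hB ψ φ hψ hφ hBcomm hz1 hw hw1 hww with hr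
    set e₀ := r e with he₀
    have hμe₀ : sepMul ψ e₀ = 1 := by
      rw [he₀, hr, sepMul_rproj, he, hρμ 1]
      apply Subtype.ext
      rw [cycProj_coe, d_one hB, mul_zero, sub_zero, OneMemClass.coe_one]
    have hce₀ : ∀ c : cyclesSubring 𝒝 dB hB,
        sepLMul ψ c e₀ = sepRMul ψ c e₀ := by
      intro c
      rw [he₀, hr, ← rproj_lmul, ← rproj_rmul, hel (c : B), her (c : B)]
    have he₀gr : e₀ ∈ sepGrading ψ (cyclesGrading 𝒝 dB hB) 0 := by
      rw [he₀, hr]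
      exact rproj_grading hψ hφ hBcomm hz1 hw hw1 hww hB hegr
    refine ⟨AddMonoidHom.mk' (fun c => sepLMul ψ c e₀)
      (fun x y => sepLMul_addElem ψ x y e₀), ⟨?_, ?_⟩, ?_⟩
    · intro c
      show sepMul ψ (sepLMul ψ c e₀) = c
      rw [sepMul_sepLMul, hμe₀, mul_one]
    · intro c₁ c c₂
      show sepLMul ψ (c₁ * c * c₂) e₀ = sepLMul ψ c₁ (sepRMul ψ c₂ (sepLMul ψ c e₀))
      rw [sepLMul_mul, sepLMul_mul, hce₀ c₂, ← sepLMul_sepRMul]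
    · intro n c hc
      show sepLMul ψ c e₀ ∈ sepGrading ψ (cyclesGrading 𝒝 dB hB) n
      have h := sepLMul_mem_grading ψ (cyclesGrading 𝒝 dB hB)
        (fun i j x y hx hy => by
          rw [mem_cyclesGrading] at hx hy ⊢
          push_cast
          exact SetLike.mul_mem_graded hx hy) hc he₀gr
      rwa [add_zero] at h
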